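/- Let V be a finite-dimensional module over U_q(sl₂) with a polarization (positive-definite contravariant symmetric form with respect to the total order on ℚ(q) given by the q-adic leading coefficient). If u is a highest weight vector of weight λ ≥ 0 (e u = 0, t u = q^λ u) with ‖u‖² = 1, then ‖f^(k) u‖² = q^{k(λ-k)}[λ choose k]_q for all 0 ≤ k ≤ λ, and hence ‖f^(k) u‖² ∈ 1 + qA. -/

import Mathlib

set_option maxHeartbeats 1000000
set_option synthInstance.maxHeartbeats 400000

noncomputable section

abbrev K : Type := RatFunc ℚ

def qq : K := RatFunc.X

/-- `x` is a rational function without pole at `q = 0`. -/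
def RegA (x : K) : Prop :=
  ∃ f g : Polynomial ℚ, Polynomial.eval 0 g ≠ 0 ∧
    x = algebraMap (Polynomial ℚ) K f / algebraMap (Polynomial ℚ) K g

/-- quantum integer `[n]_q` for `n : ℤ`. -/
def qint (n : ℤ) : K := (qq ^ n - qq ^ (-n)) / (qq - qq⁻¹)

/-- quantum factorial `[k]_q!`. -/
def qfac (k : ℕ) : K := ∏ j ∈ Finset.range k, qint ((j : ℤ) + 1)

/-- Gaussian binomial coefficient `[m choose k]_q`, `m : ℤ`, `k : ℕ`. -/
def qbinom (m : ℤ) (k : ℕ) : K := (∏ j ∈ Finset.range k, qint (m - (j : ℤ))) / qfac k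

/-- Positivity in `ℚ(q)`: `x ∈ ⊔_{n} {qⁿ(c + qA) : c ∈ ℚ_{>0}}`. -/
def PosQ (x : K) : Prop :=
  ∃ (n : ℤ) (c : ℚ) (a : K), 0 < c ∧ RegA a ∧ x = qq ^ n * ((c : K) + qq * a)

lemma q_ne : qq ≠ 0 := RatFunc.X_ne_zero

lemma one_sub_qpow_ne {m : ℕ} (hm : m ≠ 0) : (1:K) - qq ^ m ≠ 0 := by
  intro h
  have h2 : qq ^ m = 1 := by linear_combination -h
  have : (Polynomial.X ^ m : Polynomial ℚ) = 1 := by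
    apply RatFunc.algebraMap_injective ℚ
    simpa [qq, map_pow] using h2
  have := congrArg (Polynomial.eval 0) this
  simp [hm] at this

lemma d_ne : qq - qq⁻¹ ≠ 0 := by
  have h1 : (1:K) - qq ^ 2 ≠ 0 := one_sub_qpow_ne (by norm_num)
  intro h
  apply h1
  have h2 : qq⁻¹ = qq := (sub_eq_zero.mp h).symm
  rw [pow_two]
  nth_rewrite 2 [← h2]
  rw [mul_inv_cancel₀ q_ne, sub_self]

lemma qint_pos_eq (n : ℕ) : qint ((n:ℤ)+1)
    = qq ^ (-(n:ℤ)) * ((1 - qq ^ (2*(n+1))) / (1 - qq ^ 2)) := by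
  have h2 : (1:K) - qq ^ 2 ≠ 0 := one_sub_qpow_ne (by norm_num)
  have hp : (qq:K) ^ n ≠ 0 := pow_ne_zero _ q_ne
  rw [qint, div_eq_iff d_ne, ← mul_div_assoc]
  rw [show qq ^ ((n:ℤ)+1) = qq ^ n * qq by rw [zpow_add₀ q_ne, zpow_natCast, zpow_one],
      show qq ^ (-((n:ℤ)+1)) = (qq ^ n)⁻¹ * qq⁻¹ by
        rw [neg_add, zpow_add₀ q_ne, zpow_neg, zpow_neg, zpow_natCast, zpow_one],
      show qq ^ (-(n:ℤ)) = (qq ^ n)⁻¹ by rw [zpow_neg, zpow_natCast],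
      show (qq:K) ^ (2*(n+1)) = qq ^ n * qq ^ n * qq ^ 2 by rw [← pow_add, ← pow_add]; ring_nf]
  have Hs : qq * qq⁻¹ = 1 := mul_inv_cancel₀ q_ne
  have Ht : qq ^ n * qq⁻¹ ^ n = 1 := by rw [← mul_pow, Hs, one_pow]
  field_simp
  ring

lemma qint_pos_ne (n : ℕ) : qint ((n:ℤ)+1) ≠ 0 := by
  rw [qint_pos_eq]
  exact mul_ne_zero (zpow_ne_zero _ q_ne)
    (div_ne_zero (one_sub_qpow_ne (by positivity)) (one_sub_qpow_ne (by norm_num)))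

lemma qfac_ne (k : ℕ) : qfac k ≠ 0 :=
  Finset.prod_ne_zero_iff.mpr fun j _ => qint_pos_ne j

lemma qint_rec (l : ℤ) (k : ℕ) :
    qint k * qint (l - k + 1) + qint (l - 2*k) = qint ((k:ℤ)+1) * qint (l - k) := by
  have hz : ∀ m n : ℤ, qq ^ (m + n) = qq ^ m * qq ^ n := fun m n => zpow_add₀ q_ne m n
  have hzs : ∀ m n : ℤ, qq ^ (m - n) = qq ^ m * (qq ^ n)⁻¹ := fun m n => by
    rw [zpow_sub₀ q_ne, div_eq_mul_inv]
  unfold qint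
  rw [div_mul_div_comm, div_mul_div_comm, div_add_div _ _ (mul_ne_zero d_ne d_ne) d_ne,
    div_eq_div_iff (mul_ne_zero (mul_ne_zero d_ne d_ne) d_ne) (mul_ne_zero d_ne d_ne)]
  rw [show -(l - (k:ℤ) + 1) = -l + k + -1 by ring,
      show -(l - 2*(k:ℤ)) = -l + k + k by ring, show l - 2*(k:ℤ) = l - k - k by ring,
      show -((k:ℤ)+1) = -(k:ℤ) + -1 by ring,
      show -(l - (k:ℤ)) = -l + k by ring]
  simp only [hz, hzs, zpow_neg, zpow_one]
  ring

lemma qq_prod_zpow (k : ℕ) (e : ℕ → ℤ) :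
    ∏ j ∈ Finset.range k, qq ^ (e j) = qq ^ (∑ j ∈ Finset.range k, e j) := by
  induction k with
  | zero => simp
  | succ k ih => rw [Finset.prod_range_succ, Finset.sum_range_succ, ih, zpow_add₀ q_ne]

lemma sum_exp (lam : ℤ) (k : ℕ) :
    (∑ j ∈ Finset.range k, (lam - 2*(j:ℤ) - 1)) = (k:ℤ) * (lam - (k:ℤ)) := by
  induction k with
  | zero => simp
  | succ k ih => rw [Finset.sum_range_succ, ih]; push_cast; ring

/-- product reshuffle for part 1 -/
lemma prodA (lam : ℤ) (k : ℕ) :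
    (qfac k)⁻¹ * ((qfac k)⁻¹ *
      ∏ j ∈ Finset.range k, (qq ^ (lam - 2*(j:ℤ) - 1) * (qint ((j:ℤ)+1) * qint (lam - (j:ℤ)))))
    = qq ^ ((k:ℤ) * (lam - (k:ℤ))) * qbinom lam k := by
  have h1 : ∏ j ∈ Finset.range k,
      (qq ^ (lam - 2*(j:ℤ) - 1) * (qint ((j:ℤ)+1) * qint (lam - (j:ℤ))))
      = (∏ j ∈ Finset.range k, qq ^ (lam - 2*(j:ℤ) - 1)) *
        ((∏ j ∈ Finset.range k, qint ((j:ℤ)+1)) * ∏ j ∈ Finset.range k, qint (lam - (j:ℤ))) := by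
    rw [Finset.prod_mul_distrib, Finset.prod_mul_distrib]
  rw [h1, qq_prod_zpow, sum_exp, qbinom, ← qfac]
  have := qfac_ne k
  field_simp

lemma divhelp (a c d : ℤ) (h : a + c = d) (A B C : K) (hB : B ≠ 0) (hC : C ≠ 0) :
    qq ^ a * ((qq ^ c * (A / C)) / (qq ^ d * (B / C))) = A / B := by
  have hd : (qq:K) ^ d ≠ 0 := zpow_ne_zero _ q_ne
  have h1 : qq ^ a * qq ^ c = qq ^ d := by rw [← zpow_add₀ q_ne, h]
  field_simp
  linear_combination A * h1

lemma factor (N j : ℕ) (hj : j < N) :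
    qq ^ ((N:ℤ) - 2*(j:ℤ) - 1) * (qint ((N:ℤ) - (j:ℤ)) / qint ((j:ℤ)+1))
      = (1 - qq ^ (2*(N-j))) / (1 - qq ^ (2*(j+1))) := by
  have e1 : (N:ℤ) - (j:ℤ) = ((N - j - 1 : ℕ):ℤ) + 1 := by omega
  have e2 : (N - j - 1) + 1 = N - j := by omega
  rw [e1, qint_pos_eq, qint_pos_eq, e2]
  exact divhelp _ _ _ (by omega) _ _ _
    (one_sub_qpow_ne (by positivity)) (one_sub_qpow_ne (by norm_num))

/-- product reshuffle for part 2 -/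
lemma prodC (lam : ℤ) (k : ℕ) :
    qq ^ ((k:ℤ) * (lam - (k:ℤ))) * qbinom lam k
      = ∏ j ∈ Finset.range k, (qq ^ (lam - 2*(j:ℤ) - 1) * (qint (lam - (j:ℤ)) / qint ((j:ℤ)+1))) := by
  rw [Finset.prod_mul_distrib, Finset.prod_div_distrib, qq_prod_zpow, sum_exp, ← qfac, qbinom]

lemma part2 (N k : ℕ) (hk : k ≤ N) :
    ∃ a : K, RegA a ∧
      qq ^ ((k:ℤ) * ((N:ℤ) - (k:ℤ))) * qbinom (N:ℤ) k = 1 + qq * a := by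
  have hprod : qq ^ ((k:ℤ) * ((N:ℤ) - (k:ℤ))) * qbinom (N:ℤ) k
      = ∏ j ∈ Finset.range k, ((1 - qq ^ (2*(N-j))) / (1 - qq ^ (2*(j+1)))) := by
    rw [prodC]
    refine Finset.prod_congr rfl fun j hj => ?_
    exact factor N j (lt_of_lt_of_le (Finset.mem_range.mp hj) hk)
  set f : Polynomial ℚ := ∏ j ∈ Finset.range k, (1 - Polynomial.X ^ (2*(N-j))) with hf
  set g : Polynomial ℚ := ∏ j ∈ Finset.range k, (1 - Polynomial.X ^ (2*(j+1))) with hg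
  have hmap : ∀ m : ℕ, (1:K) - qq ^ m
      = algebraMap (Polynomial ℚ) K (1 - Polynomial.X ^ m) := by
    intro m; simp [qq, map_sub, map_pow, RatFunc.algebraMap_X]
  have hfK : qq ^ ((k:ℤ) * ((N:ℤ) - (k:ℤ))) * qbinom (N:ℤ) k
      = algebraMap (Polynomial ℚ) K f / algebraMap (Polynomial ℚ) K g := by
    rw [hprod, Finset.prod_div_distrib, hf, hg, map_prod, map_prod]
    congr 1 <;> exact Finset.prod_congr rfl fun j hj => hmap _
  have hevf : Polynomial.eval 0 f = 1 := by
    rw [hf, Polynomial.eval_prod]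
    refine Finset.prod_eq_one fun j hj => ?_
    have hj' : j < N := lt_of_lt_of_le (Finset.mem_range.mp hj) hk
    simp [Polynomial.eval_pow, zero_pow, Nat.mul_ne_zero, show 2*(N-j) ≠ 0 by omega]
  have hevg : Polynomial.eval 0 g = 1 := by
    rw [hg, Polynomial.eval_prod]
    refine Finset.prod_eq_one fun j hj => ?_
    simp [Polynomial.eval_pow, zero_pow, show 2*(j+1) ≠ 0 by omega]
  have hdvd : Polynomial.X ∣ (f - g) := by
    rw [Polynomial.X_dvd_iff, Polynomial.coeff_zero_eq_eval_zero, Polynomial.eval_sub,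
      hevf, hevg, sub_self]
  obtain ⟨h, hh⟩ := hdvd
  have hgne : (g : Polynomial ℚ) ≠ 0 := fun h0 => by simp [h0] at hevg
  have hgKne : algebraMap (Polynomial ℚ) K g ≠ 0 := by
    simpa using (map_ne_zero_iff _ (RatFunc.algebraMap_injective ℚ)).mpr hgne
  refine ⟨algebraMap (Polynomial ℚ) K h / algebraMap (Polynomial ℚ) K g,
    ⟨h, g, by rw [hevg]; norm_num, rfl⟩, ?_⟩
  rw [hfK]
  have hXK : (qq : K) = algebraMap (Polynomial ℚ) K Polynomial.X := by
    rw [qq, RatFunc.algebraMap_X]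
  have hfg : algebraMap (Polynomial ℚ) K f
      = algebraMap (Polynomial ℚ) K g + qq * algebraMap (Polynomial ℚ) K h := by
    have : f = g + Polynomial.X * h := by rw [← hh]; ring
    rw [this, map_add, map_mul, hXK]
  rw [hfg]
  field_simp

theorem norm_divided_power_f
    (M : Type*) [AddCommGroup M] [Module K M] [FiniteDimensional K M]
    (E F T Tinv : Module.End K M)
    (ht : T * Tinv = 1) (ht' : Tinv * T = 1)
    (hte : T * E = (qq ^ 2) • (E * T))
    (htf : T * F = (qq ^ (-2 : ℤ)) • (F * T))
    (hef : E * F - F * E = (qq - qq⁻¹)⁻¹ • (T - Tinv))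
    (B : M →ₗ[K] M →ₗ[K] K)
    (hsymm : ∀ u v : M, B u v = B v u)
    (hBe : ∀ u v : M, B (E u) v = qq⁻¹ * B u (Tinv (F v)))
    (hBf : ∀ u v : M, B (F u) v = qq⁻¹ * B u (T (E v)))
    (hpos : ∀ u : M, u ≠ 0 → PosQ (B u u))
    (lam : ℤ) (hlam : 0 ≤ lam) (u : M)
    (hu : T u = (qq ^ lam) • u) (heu : E u = 0) (hnorm : B u u = 1)
    (k : ℕ) (hk : (k : ℤ) ≤ lam) :
    B (((qfac k)⁻¹ • F ^ k) u) (((qfac k)⁻¹ • F ^ k) u)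
        = qq ^ ((k : ℤ) * (lam - (k : ℤ))) * qbinom lam k
    ∧ ∃ a : K, RegA a ∧
        B (((qfac k)⁻¹ • F ^ k) u) (((qfac k)⁻¹ • F ^ k) u) = 1 + qq * a := by
  -- T on F^k u
  have hT : ∀ m : ℕ, T ((F ^ m) u) = qq ^ (lam - 2*(m:ℤ)) • (F ^ m) u := by
    intro m
    induction m with
    | zero => simpa using hu
    | succ m ih =>
      have hc := DFunLike.congr_fun htf ((F ^ m) u)
      simp only [Module.End.mul_apply, LinearMap.smul_apply] at hc
      have : (F ^ (m+1)) u = F ((F ^ m) u) := by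
        rw [pow_succ']; rfl
      rw [this, hc, ih, map_smul, smul_smul, ← zpow_add₀ q_ne]
      congr 2
      push_cast; ring
  -- Tinv on eigenvectors
  have hinv : ∀ (v : M) (m : ℤ), T v = qq ^ m • v → Tinv v = qq ^ (-m) • v := by
    intro v m h
    have h0 := DFunLike.congr_fun ht' v
    simp only [Module.End.mul_apply, Module.End.one_apply] at h0
    rw [h, map_smul] at h0
    have : Tinv v = qq ^ (-m) • (qq ^ m • Tinv v) := by
      rw [smul_smul, ← zpow_add₀ q_ne, neg_add_cancel, zpow_zero, one_smul]
    rw [this, h0]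
  -- E on F^(m+1) u
  have qint_one : qint 1 = 1 := by
    rw [qint]
    norm_num
    exact d_ne
  have hE : ∀ m : ℕ, E ((F ^ (m+1)) u)
      = (qint ((m:ℤ)+1) * qint (lam - (m:ℤ))) • (F ^ m) u := by
    intro m
    induction m with
    | zero =>
      have hc := DFunLike.congr_fun hef u
      simp only [Module.End.mul_apply, LinearMap.smul_apply, LinearMap.sub_apply] at hc
      have h1 : E (F u) = F (E u) + (qq - qq⁻¹)⁻¹ • (T u - Tinv u) := eq_add_of_sub_eq' hc
      have hTinvu : Tinv u = qq ^ (-lam) • u := hinv u lam hu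
      have h0 : (F ^ (0+1)) u = F u := by simp
      have h0' : (F ^ 0) u = u := by simp
      rw [h0, h0', h1, heu, map_zero, hu, hTinvu, zero_add, ← sub_smul, smul_smul]
      congr 1
      simp only [Nat.cast_zero, zero_add, sub_zero]
      rw [qint_one, one_mul, qint, inv_mul_eq_div]
    | succ m ih =>
      have hc := DFunLike.congr_fun hef ((F ^ (m+1)) u)
      simp only [Module.End.mul_apply, LinearMap.smul_apply, LinearMap.sub_apply] at hc
      have h1 : E (F ((F ^ (m+1)) u)) = F (E ((F ^ (m+1)) u))
          + (qq - qq⁻¹)⁻¹ • (T ((F ^ (m+1)) u) - Tinv ((F ^ (m+1)) u)) := eq_add_of_sub_eq' hc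
      have hTm := hT (m+1)
      have hTim := hinv _ _ hTm
      have hstep : (F ^ (m+1+1)) u = F ((F ^ (m+1)) u) := by rw [pow_succ']; rfl
      have hstep2 : (F ^ (m+1)) u = F ((F ^ m) u) := by rw [pow_succ']; rfl
      rw [hstep, h1, ih, hTm, hTim, map_smul, ← sub_smul, smul_smul, ← hstep2]
      rw [← add_smul]
      congr 1
      have hqd : ∀ A : ℤ, (qq - qq⁻¹)⁻¹ * (qq ^ A - qq ^ (-A)) = qint A := fun A => by
        rw [qint, inv_mul_eq_div]
      rw [hqd]
      have hrec := qint_rec lam (m+1)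
      push_cast at hrec ⊢
      rw [show lam - ((m:ℤ)+1) + 1 = lam - (m:ℤ) by ring] at hrec
      linear_combination hrec
  -- norm of F^k u
  have hBv : ∀ m : ℕ, B ((F ^ m) u) ((F ^ m) u)
      = ∏ j ∈ Finset.range m, (qq ^ (lam - 2*(j:ℤ) - 1) * (qint ((j:ℤ)+1) * qint (lam - (j:ℤ)))) := by
    intro m
    induction m with
    | zero => simpa using hnorm
    | succ m ih =>
      have hstep2 : (F ^ (m+1)) u = F ((F ^ m) u) := by rw [pow_succ']; rfl
      rw [Finset.prod_range_succ, ← ih]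
      nth_rewrite 1 [hstep2]
      rw [hBf]
      rw [hE m]
      rw [map_smul, hT m]
      simp only [map_smul, smul_smul, smul_eq_mul]
      rw [show lam - 2*(m:ℤ) - 1 = (lam - 2*(m:ℤ)) + (-1) by ring, zpow_add₀ q_ne, zpow_neg_one]
      ring
  -- assemble
  have hBk : B (((qfac k)⁻¹ • F ^ k) u) (((qfac k)⁻¹ • F ^ k) u)
      = qq ^ ((k:ℤ) * (lam - (k:ℤ))) * qbinom lam k := by
    have happ : ((qfac k)⁻¹ • F ^ k) u = (qfac k)⁻¹ • ((F ^ k) u) := rfl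
    rw [happ]
    simp only [map_smul, LinearMap.smul_apply, smul_eq_mul]
    rw [hBv k]
    exact prodA lam k
  refine ⟨hBk, ?_⟩
  obtain ⟨N, rfl⟩ : ∃ N : ℕ, lam = (N:ℤ) := ⟨lam.toNat, (Int.toNat_of_nonneg hlam).symm⟩
  obtain ⟨a, ha, hEq⟩ := part2 N k (by exact_mod_cast hk)
  exact ⟨a, ha, by rw [hBk, hEq]⟩
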